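/- Let D = (V,A) be a digraph containing two opposite arcs a and a' (i.e., s(a') = t(a) and t(a') = s(a)), and let e = {a, a'}. Then B_D(q,y,z) = yz · B_{D∖e}(q,y,z) + (1 − yz) · B_{D/e}(q,y,z), where D∖e is obtained from D by deleting both arcs a and a', and D/e is obtained from D by deleting both arcs a and a' and identifying the two vertices s(a) and t(a). Equivalently, for every positive integer q the corresponding identity holds between the coloring sums defining these B-polynomials. -/

import Mathlib

open Finset

/-- The sum over all `q`-colorings of a digraph of
`y ^ (number of ascents) * z ^ (number of descents)`. -/
def colorSum (V A : Type) [Fintype V] [DecidableEq V] [Fintype A]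
    (s t : A → V) (q : ℕ) (y z : ℚ) : ℚ :=
  ∑ f : V → Fin q,
    y ^ (Finset.univ.filter (fun a => f (s a) < f (t a))).card *
    z ^ (Finset.univ.filter (fun a => f (t a) < f (s a))).card

/-- Splitting the count of arcs satisfying `P` according to whether the arc is
`a`, `a'`, or neither. -/
theorem card_split_aux (A : Type) [Fintype A] [DecidableEq A] (a a' : A) (haa' : a ≠ a')
    (P : A → Prop) [DecidablePred P] :
    (univ.filter P).card =
      ((univ : Finset {b : A // b ≠ a ∧ b ≠ a'}).filter (fun b => P b.1)).card
      + (if P a then 1 else 0) + (if P a' then 1 else 0) := by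
  have h1 : ((univ : Finset {b : A // b ≠ a ∧ b ≠ a'}).filter (fun b => P b.1)).card
      = ((univ.filter P).filter (fun b => b ≠ a ∧ b ≠ a')).card := by
    rw [Finset.filter_filter]
    apply Finset.card_bij (fun b _ => b.1)
    · intro b hb; simp at hb ⊢; exact ⟨hb, b.2⟩
    · intro b hb c hc h; exact Subtype.ext h
    · intro b hb; simp at hb; exact ⟨⟨b, hb.2⟩, by simp [hb.1], rfl⟩
  have h2 := Finset.card_filter_add_card_filter_not
    (s := univ.filter P) (p := fun b => b ≠ a ∧ b ≠ a')
  have h3 : ((univ.filter P).filter (fun b => ¬(b ≠ a ∧ b ≠ a'))).card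
      = (if P a then 1 else 0) + (if P a' then 1 else 0) := by
    have : (univ.filter P).filter (fun b => ¬(b ≠ a ∧ b ≠ a'))
        = ({a, a'} : Finset A).filter P := by
      ext b
      simp only [Finset.mem_filter, Finset.mem_univ, true_and, not_and, not_not,
        Finset.mem_insert, Finset.mem_singleton]
      constructor
      · rintro ⟨hp, h⟩
        by_cases hb : b = a
        · exact ⟨Or.inl hb, hp⟩
        · exact ⟨Or.inr (h hb), hp⟩
      · rintro ⟨h, hp⟩
        refine ⟨hp, fun hb => ?_⟩
        rcases h with h | h
        · exact absurd h hb
        · exact h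
    rw [this]
    rw [Finset.filter_insert, Finset.filter_singleton]
    by_cases ha : P a <;> by_cases ha' : P a' <;>
      simp [ha, ha', Finset.card_insert_of_notMem, haa']
  omega

/-- The deletion–contraction identity for the coloring sums, at each fixed `q`. -/
theorem colorSum_del_con (V A : Type) [Fintype V] [DecidableEq V]
    [Fintype A] [DecidableEq A]
    (s t : A → V) (a a' : A) (haa' : a ≠ a') (hs : s a' = t a) (ht : t a' = s a)
    (V' : Type) [Fintype V'] [DecidableEq V'] (π : V → V')
    (hπsurj : Function.Surjective π)
    (hπ : ∀ x y : V, π x = π y ↔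
      (x = y ∨ ((x = s a ∨ x = t a) ∧ (y = s a ∨ y = t a))))
    (q : ℕ) (y z : ℚ) :
    colorSum V A s t q y z =
      y * z * colorSum V {b : A // b ≠ a ∧ b ≠ a'} (fun b => s b.1) (fun b => t b.1) q y z +
      (1 - y * z) * colorSum V' {b : A // b ≠ a ∧ b ≠ a'}
        (fun b => π (s b.1)) (fun b => π (t b.1)) q y z := by
  classical
  set w : (V → Fin q) → ℚ := fun f =>
    y ^ ((univ : Finset {b : A // b ≠ a ∧ b ≠ a'}).filter (fun b => f (s b.1) < f (t b.1))).card *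
    z ^ ((univ : Finset {b : A // b ≠ a ∧ b ≠ a'}).filter (fun b => f (t b.1) < f (s b.1))).card
    with hw
  have key : ∀ f : V → Fin q,
      y ^ (univ.filter (fun b => f (s b) < f (t b))).card *
        z ^ (univ.filter (fun b => f (t b) < f (s b))).card
      = (if f (s a) = f (t a) then 1 else y * z) * w f := by
    intro f
    rw [card_split_aux A a a' haa' (fun b => f (s b) < f (t b)),
        card_split_aux A a a' haa' (fun b => f (t b) < f (s b))]
    simp only [hs, ht]
    rcases lt_trichotomy (f (s a)) (f (t a)) with h | h | h
    · rw [if_neg h.ne]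
      simp only [if_pos h, if_neg (not_lt.2 h.le), if_neg (lt_asymm h)]
      ring
    · simp [h]; rfl
    · rw [if_neg h.ne']
      simp only [if_pos h, if_neg (not_lt.2 h.le), if_neg (lt_asymm h)]
      ring
  have hcon : colorSum V' {b : A // b ≠ a ∧ b ≠ a'}
        (fun b => π (s b.1)) (fun b => π (t b.1)) q y z
      = ∑ f ∈ univ.filter (fun f : V → Fin q => f (s a) = f (t a)), w f := by
    rw [colorSum]
    apply Finset.sum_nbij' (fun g => g ∘ π) (fun f => f ∘ Function.surjInv hπsurj)
    · intro g _
      simp only [Finset.mem_filter, Finset.mem_univ, true_and, Function.comp_apply]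
      have : π (s a) = π (t a) := (hπ _ _).2 (Or.inr ⟨Or.inl rfl, Or.inr rfl⟩)
      rw [this]
    · intro f _; exact Finset.mem_univ _
    · intro g _
      funext x
      simp only [Function.comp_apply]
      exact congrArg g (Function.rightInverse_surjInv hπsurj x)
    · intro f hf
      simp only [Finset.mem_filter, Finset.mem_univ, true_and] at hf
      funext x
      have hπx : π (Function.surjInv hπsurj (π x)) = π x :=
        Function.surjInv_eq hπsurj (π x)
      rcases (hπ _ _).1 hπx with h | ⟨h1, h2⟩
      · exact congrArg f h
      · simp only [Function.comp_apply]
        rcases h1 with h1 | h1 <;> rcases h2 with h2 | h2 <;>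
          rw [h1, h2] <;> simp [hf]
    · intro g _
      rfl
  calc colorSum V A s t q y z
      = ∑ f : V → Fin q, (if f (s a) = f (t a) then 1 else y * z) * w f := by
        rw [colorSum]; exact Finset.sum_congr rfl fun f _ => key f
    _ = ∑ f : V → Fin q, (y * z * w f +
          (if f (s a) = f (t a) then (1 - y * z) * w f else 0)) := by
        apply Finset.sum_congr rfl
        intro f _
        by_cases h : f (s a) = f (t a) <;> simp [h] <;> ring
    _ = _ := by
        rw [Finset.sum_add_distrib, ← Finset.mul_sum, Finset.sum_ite, Finset.sum_const_zero,
          add_zero, ← Finset.mul_sum, hcon, colorSum]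

theorem eval_aeval_poly (y z r : ℚ) (P : MvPolynomial (Fin 3) ℚ) :
    (MvPolynomial.aeval ![Polynomial.X, Polynomial.C y, Polynomial.C z] P).eval r
      = MvPolynomial.eval ![r, y, z] P := by
  induction P using MvPolynomial.induction_on with
  | C c => simp
  | add p q hp hq => simp [hp, hq]
  | mul_X p n hp =>
    fin_cases n <;> simp [hp]

theorem extrap (F : MvPolynomial (Fin 3) ℚ)
    (h : ∀ q : ℕ, 0 < q → ∀ y z : ℚ, MvPolynomial.eval ![(q : ℚ), y, z] F = 0) :
    ∀ q y z : ℚ, MvPolynomial.eval ![q, y, z] F = 0 := by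
  intro q y z
  set p := MvPolynomial.aeval ![Polynomial.X, Polynomial.C y, Polynomial.C z] F with hp
  have hzero : p = 0 := by
    apply Polynomial.eq_zero_of_infinite_isRoot
    apply Set.Infinite.mono (s := Set.range (fun n : ℕ => ((n + 1 : ℕ) : ℚ)))
    · rintro x ⟨n, rfl⟩
      simp only [Set.mem_setOf_eq, Polynomial.IsRoot, hp, eval_aeval_poly]
      exact h (n + 1) (Nat.succ_pos n) y z
    · apply Set.infinite_range_of_injective
      intro m n h
      simp only [Nat.cast_inj] at h
      omega
  have := eval_aeval_poly y z q F
  rw [← hp, hzero] at this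
  simpa using this.symm

/-- if a digraph `D = (V,A)` contains two opposite arcs `a, a'`
(`s a' = t a`, `t a' = s a`) and `e = {a, a'}`, then
`B_D(q,y,z) = yz · B_{D∖e}(q,y,z) + (1 − yz) · B_{D/e}(q,y,z)`.
Here `D∖e` has arc set `{b : A // b ≠ a ∧ b ≠ a'}`, and `D/e` is realized by any
vertex set `V'` together with a surjection `π : V → V'` identifying exactly `s a`
and `t a` (its arcs are those of `D∖e`, with endpoints pushed forward by `π`). -/
theorem B_deletion_contraction_edge (V A : Type) [Fintype V] [DecidableEq V]
    [Fintype A] [DecidableEq A]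
    (s t : A → V) (a a' : A) (haa' : a ≠ a') (hs : s a' = t a) (ht : t a' = s a)
    (V' : Type) [Fintype V'] [DecidableEq V'] (π : V → V')
    (hπsurj : Function.Surjective π)
    (hπ : ∀ x y : V, π x = π y ↔
      (x = y ∨ ((x = s a ∨ x = t a) ∧ (y = s a ∨ y = t a))))
    (B Bdel Bcon : MvPolynomial (Fin 3) ℚ)
    (hB : ∀ q : ℕ, 0 < q → ∀ y z : ℚ,
      MvPolynomial.eval ![(q : ℚ), y, z] B = colorSum V A s t q y z)
    (hBdel : ∀ q : ℕ, 0 < q → ∀ y z : ℚ,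
      MvPolynomial.eval ![(q : ℚ), y, z] Bdel =
        colorSum V {b : A // b ≠ a ∧ b ≠ a'} (fun b => s b.1) (fun b => t b.1) q y z)
    (hBcon : ∀ q : ℕ, 0 < q → ∀ y z : ℚ,
      MvPolynomial.eval ![(q : ℚ), y, z] Bcon =
        colorSum V' {b : A // b ≠ a ∧ b ≠ a'}
          (fun b => π (s b.1)) (fun b => π (t b.1)) q y z) :
    ∀ q y z : ℚ,
      MvPolynomial.eval ![q, y, z] B =
        y * z * MvPolynomial.eval ![q, y, z] Bdel +
        (1 - y * z) * MvPolynomial.eval ![q, y, z] Bcon := by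
  intro q y z
  set F : MvPolynomial (Fin 3) ℚ :=
    B - MvPolynomial.X 1 * MvPolynomial.X 2 * Bdel -
      (1 - MvPolynomial.X 1 * MvPolynomial.X 2) * Bcon with hF
  have hFeval : ∀ q y z : ℚ, MvPolynomial.eval ![q, y, z] F =
      MvPolynomial.eval ![q, y, z] B - y * z * MvPolynomial.eval ![q, y, z] Bdel -
      (1 - y * z) * MvPolynomial.eval ![q, y, z] Bcon := by
    intro q y z
    simp [hF]
  have h0 : ∀ n : ℕ, 0 < n → ∀ y z : ℚ, MvPolynomial.eval ![(n : ℚ), y, z] F = 0 := by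
    intro n hn y z
    rw [hFeval, hB n hn y z, hBdel n hn y z, hBcon n hn y z,
      colorSum_del_con V A s t a a' haa' hs ht V' π hπsurj hπ n y z]
    ring
  have := extrap F h0 q y z
  rw [hFeval] at this
  linarith
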